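/- Let N and M be positive natural numbers, let θ_1, …, θ_M be positive reals, and let ξ_1, …, ξ_M be independent real random variables with ξ_m following the Gamma distribution with shape N and scale θ_m for each m. Then E[(∑_{m=1}^M ξ_m)^4] = ∑_m N(N+1)(N+2)(N+3) θ_m^4 + 4 ∑_{m ≠ m_1} N(N+1)(N+2) θ_m^3 · N θ_{m_1} + 3 ∑_{m ≠ m_1} N(N+1) θ_m^2 · N(N+1) θ_{m_1}^2 + 6 ∑_{m, m_1, m_2 pairwise distinct} N(N+1) θ_m^2 · N θ_{m_1} · N θ_{m_2} + ∑_{m, m_1, m_2, m_3 pairwise distinct} N^4 θ_m θ_{m_1} θ_{m_2} θ_{m_3}. (This is the second moment u_{U_k^1}^{(2)} of the desired-signal term in Lemma 1, equation (35) combined with the Gamma moments (17).) -/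

import Mathlib

open MeasureTheory ProbabilityTheory Real

/-- The density of the Gamma distribution with shape `a` and scale `θ`
(with respect to Lebesgue measure): `t ^ (a-1) * exp (-t/θ) / (Γ a * θ ^ a)` for `t > 0`,
and `0` for `t ≤ 0`. -/
noncomputable def gammaScalePDF (a θ t : ℝ) : ℝ :=
  if 0 < t then t ^ (a - 1) * Real.exp (-t / θ) / (Real.Gamma a * θ ^ a) else 0

/-- A real random variable `X` on `(Ω, P)` follows the Gamma distribution with
shape `a` and scale `θ`. -/
def HasGammaLaw {Ω : Type*} [MeasurableSpace Ω] (P : Measure Ω) (X : Ω → ℝ)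
    (a θ : ℝ) : Prop :=
  Measure.map X P = volume.withDensity (fun t => ENNReal.ofReal (gammaScalePDF a θ t))

namespace DSaux


lemma measurable_gammaScalePDF (a θ : ℝ) : Measurable (gammaScalePDF a θ) := by
  unfold gammaScalePDF
  apply Measurable.ite (measurableSet_Ioi (a := (0:ℝ)))
  · fun_prop
  · exact measurable_const

lemma gammaScalePDF_nonneg {a θ : ℝ} (ha : 0 < a) (hθ : 0 < θ) (t : ℝ) :
    0 ≤ gammaScalePDF a θ t := by
  unfold gammaScalePDF
  split_ifs with h
  · apply div_nonneg
    · exact mul_nonneg (Real.rpow_nonneg h.le _) (Real.exp_pos _).le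
    · exact (mul_pos (Real.Gamma_pos_of_pos ha) (Real.rpow_pos_of_pos hθ a)).le
  · exact le_refl 0

lemma gammaScalePDF_eqOn {a θ : ℝ} (hθ : 0 < θ) (k : ℕ) :
    Set.EqOn (fun t : ℝ => (Real.Gamma a * θ ^ a)⁻¹ * (t ^ (a + k - 1) * Real.exp (-(θ⁻¹ * t))))
      (fun t : ℝ => t ^ k * gammaScalePDF a θ t) (Set.Ioi 0) := by
  intro t ht
  have ht' : (0:ℝ) < t := ht
  simp only [gammaScalePDF, if_pos ht']
  rw [show a + (k:ℝ) - 1 = (a - 1) + (k:ℝ) by ring, Real.rpow_add ht', Real.rpow_natCast,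
    show -(θ⁻¹ * t) = -t / θ by ring]
  ring

lemma gammaScale_pdf_mul_integrable {a θ : ℝ} (ha : 0 < a) (hθ : 0 < θ) (k : ℕ) :
    Integrable (fun t : ℝ => t ^ k * gammaScalePDF a θ t) := by
  rw [← integrableOn_iff_integrable_of_support_subset (s := Set.Ioi (0:ℝ)) ?_]
  · have base := integrableOn_rpow_mul_exp_neg_mul_rpow (p := 1) (s := a + k - 1) (b := θ⁻¹)
      (by have : (0:ℝ) ≤ k := Nat.cast_nonneg k; linarith) zero_lt_one (inv_pos.2 hθ)
    have base' : IntegrableOn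
        (fun t : ℝ => (Real.Gamma a * θ ^ a)⁻¹ * (t ^ (a + k - 1) * Real.exp (-(θ⁻¹ * t))))
        (Set.Ioi 0) volume := by
      refine IntegrableOn.congr_fun (base.const_mul ((Real.Gamma a * θ ^ a)⁻¹))
        (fun t ht => ?_) measurableSet_Ioi
      rw [Real.rpow_one, neg_mul]
    exact IntegrableOn.congr_fun base' (gammaScalePDF_eqOn hθ k) measurableSet_Ioi
  · intro t ht
    simp only [Function.mem_support, ne_eq] at ht
    by_contra h
    apply ht
    have h' : ¬ (0:ℝ) < t := h
    simp [gammaScalePDF, if_neg h']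

lemma gammaScale_pdf_mul_integral {a θ : ℝ} (ha : 0 < a) (hθ : 0 < θ) (k : ℕ) :
    ∫ t : ℝ, t ^ k * gammaScalePDF a θ t
      = Real.Gamma (a + k) / Real.Gamma a * θ ^ k := by
  rw [← setIntegral_eq_integral_of_forall_compl_eq_zero (s := Set.Ioi (0:ℝ))
    (fun t ht => by
      have h' : ¬ (0:ℝ) < t := ht
      simp [gammaScalePDF, if_neg h'])]
  rw [← setIntegral_congr_fun measurableSet_Ioi (gammaScalePDF_eqOn hθ k)]
  rw [MeasureTheory.integral_const_mul]
  rw [show a + (k:ℝ) - 1 = (a + k) - 1 by ring]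
  rw [integral_rpow_mul_exp_neg_mul_Ioi (by positivity) (inv_pos.2 hθ)]
  rw [one_div, inv_inv, Real.rpow_add hθ, Real.rpow_natCast]
  have h1 : Real.Gamma a ≠ 0 := (Real.Gamma_pos_of_pos ha).ne'
  have h2 : (θ : ℝ) ^ a ≠ 0 := (Real.rpow_pos_of_pos hθ a).ne'
  field_simp

lemma hasGammaLaw_moment {Ω : Type*} [MeasurableSpace Ω] {P : Measure Ω} {X : Ω → ℝ}
    {a θ : ℝ} (ha : 0 < a) (hθ : 0 < θ) (hX : Measurable X) (h : HasGammaLaw P X a θ)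
    (k : ℕ) :
    Integrable (fun ω => X ω ^ k) P ∧
      ∫ ω, X ω ^ k ∂P = Real.Gamma (a + k) / Real.Gamma a * θ ^ k := by
  have hmeaspow : AEStronglyMeasurable (fun t : ℝ => t ^ k) (Measure.map X P) :=
    (measurable_id.pow_const k).aestronglyMeasurable
  have hmap : Integrable (fun t : ℝ => t ^ k) (Measure.map X P) := by
    rw [h, integrable_withDensity_iff ((measurable_gammaScalePDF a θ).ennreal_ofReal)
      (Filter.Eventually.of_forall (fun t => ENNReal.ofReal_lt_top))]
    have : (fun t : ℝ => t ^ k * (ENNReal.ofReal (gammaScalePDF a θ t)).toReal)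
        = fun t : ℝ => t ^ k * gammaScalePDF a θ t := by
      funext t
      rw [ENNReal.toReal_ofReal (gammaScalePDF_nonneg ha hθ t)]
    rw [this]
    exact gammaScale_pdf_mul_integrable ha hθ k
  constructor
  · exact (integrable_map_measure hmeaspow hX.aemeasurable).mp hmap
  · calc ∫ ω, X ω ^ k ∂P = ∫ t : ℝ, t ^ k ∂(Measure.map X P) :=
          (integral_map hX.aemeasurable hmeaspow).symm
      _ = ∫ t : ℝ, (gammaScalePDF a θ t).toNNReal • (t ^ k) := by
          rw [h]
          exact integral_withDensity_eq_integral_smul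
            ((measurable_gammaScalePDF a θ).real_toNNReal) _
      _ = ∫ t : ℝ, t ^ k * gammaScalePDF a θ t := by
          congr 1
          funext t
          simp [NNReal.smul_def, Real.coe_toNNReal _ (gammaScalePDF_nonneg ha hθ t), mul_comm]
      _ = _ := gammaScale_pdf_mul_integral ha hθ k

lemma Gamma_nat_shift {a : ℝ} (ha : 0 < a) (k : ℕ) :
    Real.Gamma (a + k) = Real.Gamma a * ∏ i ∈ Finset.range k, (a + i) := by
  induction k with
  | zero => simp
  | succ n ih =>
      have hne : a + (n:ℝ) ≠ 0 := by positivity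
      rw [show a + ((n+1 : ℕ):ℝ) = (a + n) + 1 by push_cast; ring, Real.Gamma_add_one hne,
        ih, Finset.prod_range_succ]
      ring


lemma hasGammaLaw_nonneg {Ω : Type*} [MeasurableSpace Ω] {P : Measure Ω} {X : Ω → ℝ}
    {a θ : ℝ} (hX : Measurable X) (h : HasGammaLaw P X a θ) : ∀ᵐ ω ∂P, 0 ≤ X ω := by
  have hz : ∀ t ∈ Set.Iio (0:ℝ), ENNReal.ofReal (gammaScalePDF a θ t) = 0 := by
    intro t ht
    have hnt : ¬ (0:ℝ) < t := by
      simp only [Set.mem_Iio] at ht; linarith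
    simp [gammaScalePDF, hnt]
  have hmap0 : Measure.map X P (Set.Iio 0) = 0 := by
    rw [h, withDensity_apply _ measurableSet_Iio,
      setLIntegral_congr_fun measurableSet_Iio hz, lintegral_zero]
  have hpre : P (X ⁻¹' Set.Iio 0) = 0 := by
    rw [← Measure.map_apply hX measurableSet_Iio]; exact hmap0
  rw [ae_iff, show {ω | ¬ 0 ≤ X ω} = X ⁻¹' Set.Iio 0 from by ext ω; simp [not_le]]
  exact hpre


lemma indep_prod_integral {Ω ι : Type*} [MeasurableSpace Ω] {P : Measure Ω}
    [IsProbabilityMeasure P] {f : ι → Ω → ℝ}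
    (hind : iIndepFun f P)
    (hm : ∀ i, Measurable (f i)) (hi : ∀ i, Integrable (f i) P) (s : Finset ι) :
    Integrable (fun ω => ∏ i ∈ s, f i ω) P ∧
      ∫ ω, ∏ i ∈ s, f i ω ∂P = ∏ i ∈ s, ∫ ω, f i ω ∂P := by
  classical
  induction s using Finset.induction_on with
  | empty => simp
  | @insert a s ha ih =>
    have hprod : (fun ω => ∏ i ∈ s, f i ω) = ∏ i ∈ s, f i := by
      funext ω; rw [Finset.prod_apply]
    have hIndep : IndepFun (∏ i ∈ s, f i) (f a) P :=
      hind.indepFun_finsetProd_of_notMem hm ha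
    have hip : Integrable (∏ i ∈ s, f i) P := hprod ▸ ih.1
    have heq : (fun ω => ∏ i ∈ insert a s, f i ω)
        = (∏ i ∈ s, f i) * f a := by
      funext ω
      simp only [Finset.prod_insert ha, Pi.mul_apply, Finset.prod_apply]
      ring
    constructor
    · rw [heq]; exact hIndep.integrable_mul hip (hi a)
    · rw [heq, hIndep.integral_mul_eq_mul_integral hip.aestronglyMeasurable (hi a).aestronglyMeasurable, Finset.prod_insert ha,
        ← hprod, ih.2]
      ring



variable {ι : Type*} [Fintype ι] [DecidableEq ι]

lemma split1 (a : ι) (f : ι → ℝ) :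
    ∑ x, f x = ∑ x ∈ Finset.univ \ {a}, f x + f a :=
  Finset.sum_eq_sum_sdiff_singleton_add (Finset.mem_univ a) f

lemma split2 {a b : ι} (hab : a ≠ b) (f : ι → ℝ) :
    ∑ x, f x = ∑ x ∈ Finset.univ \ {a, b}, f x + f a + f b := by
  rw [← Finset.sum_sdiff (Finset.subset_univ ({a, b} : Finset ι)),
    Finset.sum_insert (by simpa using hab), Finset.sum_singleton]
  ring

lemma split3 {a b c : ι} (hab : a ≠ b) (hac : a ≠ c) (hbc : b ≠ c) (f : ι → ℝ) :
    ∑ x, f x = ∑ x ∈ Finset.univ \ {a, b, c}, f x + f a + f b + f c := by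
  rw [← Finset.sum_sdiff (Finset.subset_univ ({a, b, c} : Finset ι)),
    Finset.sum_insert (by simp [hab, hac]), Finset.sum_insert (by simpa using hbc),
    Finset.sum_singleton]
  ring

lemma sym2s (s : Finset ι) (g : ι → ι → ℝ) :
    ∑ x ∈ s, ∑ y ∈ s \ {x}, g x y = ∑ x ∈ s, ∑ y ∈ s \ {x}, g y x := by
  rw [Finset.sum_comm' (s' := fun y => s \ {y}) (t' := s)
    (by intro x y; simp only [Finset.mem_sdiff, Finset.mem_singleton]; tauto)]

lemma sym3_12 (g : ι → ι → ι → ℝ) :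
    ∑ a, ∑ b ∈ Finset.univ \ {a}, ∑ c ∈ Finset.univ \ {a, b}, g a b c
      = ∑ a, ∑ b ∈ Finset.univ \ {a}, ∑ c ∈ Finset.univ \ {a, b}, g b a c := by
  rw [Finset.sum_comm' (s' := fun b => Finset.univ \ {b}) (t' := Finset.univ)
    (by intro x y; simp only [Finset.mem_sdiff, Finset.mem_singleton, Finset.mem_univ,
          true_and]; tauto)]
  refine Finset.sum_congr rfl fun a _ => Finset.sum_congr rfl fun b _ => ?_
  rw [Finset.pair_comm]

lemma sdiff_pair (a b : ι) :
    (Finset.univ \ {a, b} : Finset ι) = (Finset.univ \ {a}) \ {b} := by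
  ext x; simp [and_comm]

lemma sym3_23 (g : ι → ι → ι → ℝ) :
    ∑ a, ∑ b ∈ Finset.univ \ {a}, ∑ c ∈ Finset.univ \ {a, b}, g a b c
      = ∑ a, ∑ b ∈ Finset.univ \ {a}, ∑ c ∈ Finset.univ \ {a, b}, g a c b := by
  refine Finset.sum_congr rfl fun a _ => ?_
  simp only [sdiff_pair]
  exact sym2s (Finset.univ \ {a}) (fun b c => g a b c)

lemma sym3_cycle (g : ι → ι → ι → ℝ) :
    ∑ a, ∑ b ∈ Finset.univ \ {a}, ∑ c ∈ Finset.univ \ {a, b}, g a b c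
      = ∑ a, ∑ b ∈ Finset.univ \ {a}, ∑ c ∈ Finset.univ \ {a, b}, g b c a := by
  rw [sym3_23 g, sym3_12 (fun x y z => g x z y)]

lemma expand4 (J : ι → ι → ι → ι → ℝ) (E1 E2 E3 E4 : ι → ℝ)
    (hs12 : ∀ a b c d, J a b c d = J b a c d)
    (hs23 : ∀ a b c d, J a b c d = J a c b d)
    (hs34 : ∀ a b c d, J a b c d = J a b d c)
    (h4 : ∀ a, J a a a a = E4 a)
    (h31 : ∀ a b, a ≠ b → J a a a b = E3 a * E1 b)
    (h22 : ∀ a b, a ≠ b → J a a b b = E2 a * E2 b)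
    (h211 : ∀ a b c, a ≠ b → a ≠ c → b ≠ c → J a a b c = E2 a * E1 b * E1 c)
    (h1111 : ∀ a b c d, a ≠ b → a ≠ c → a ≠ d → b ≠ c → b ≠ d → c ≠ d →
      J a b c d = E1 a * E1 b * E1 c * E1 d) :
    ∑ a, ∑ b, ∑ c, ∑ d, J a b c d =
      (∑ a, E4 a)
      + 4 * ∑ a, ∑ b ∈ Finset.univ \ {a}, E3 a * E1 b
      + 3 * ∑ a, ∑ b ∈ Finset.univ \ {a}, E2 a * E2 b
      + 6 * ∑ a, ∑ b ∈ Finset.univ \ {a}, ∑ c ∈ Finset.univ \ {a, b}, E2 a * E1 b * E1 c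
      + ∑ a, ∑ b ∈ Finset.univ \ {a}, ∑ c ∈ Finset.univ \ {a, b},
          ∑ d ∈ Finset.univ \ {a, b, c}, E1 a * E1 b * E1 c * E1 d := by
  have v2 : ∀ a b, a ≠ b → J a a b a = E3 a * E1 b := fun a b h => by
    rw [hs34]; exact h31 a b h
  have v3 : ∀ a b, a ≠ b → J a b a a = E3 a * E1 b := fun a b h => by
    rw [hs23]; exact v2 a b h
  have v4 : ∀ a b, a ≠ b → J b a a a = E3 a * E1 b := fun a b h => by
    rw [hs12]; exact v3 a b h
  have w2 : ∀ a b, a ≠ b → J a b a b = E2 a * E2 b := fun a b h => by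
    rw [hs23]; exact h22 a b h
  have w3 : ∀ a b, a ≠ b → J a b b a = E2 a * E2 b := fun a b h => by
    rw [hs34]; exact w2 a b h
  have u2 : ∀ a b c, a ≠ b → a ≠ c → b ≠ c → J a b a c = E2 a * E1 b * E1 c :=
    fun a b c h1 h2 h3 => by rw [hs23]; exact h211 a b c h1 h2 h3
  have u3 : ∀ a b c, a ≠ b → a ≠ c → b ≠ c → J a b c a = E2 a * E1 b * E1 c :=
    fun a b c h1 h2 h3 => by rw [hs34]; exact u2 a b c h1 h2 h3
  have u4 : ∀ a b c, a ≠ b → a ≠ c → b ≠ c → J b a a c = E2 a * E1 b * E1 c :=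
    fun a b c h1 h2 h3 => by rw [hs12]; exact u2 a b c h1 h2 h3
  have u5 : ∀ a b c, a ≠ b → a ≠ c → b ≠ c → J b a c a = E2 a * E1 b * E1 c :=
    fun a b c h1 h2 h3 => by rw [hs34]; exact u4 a b c h1 h2 h3
  have u6 : ∀ a b c, a ≠ b → a ≠ c → b ≠ c → J b c a a = E2 a * E1 b * E1 c :=
    fun a b c h1 h2 h3 => by rw [hs23]; exact u5 a b c h1 h2 h3
  have hDaaa : ∀ a, ∑ d, J a a a d
      = (∑ d ∈ Finset.univ \ {a}, E3 a * E1 d) + E4 a := by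
    intro a
    rw [split1 a (fun d => J a a a d)]
    congr 1
    · refine Finset.sum_congr rfl fun d hd => ?_
      have hda : d ≠ a := by simpa using hd
      exact h31 a d hda.symm
    · exact h4 a
  have hDaac : ∀ a c, a ≠ c → ∑ d, J a a c d
      = ((∑ d ∈ Finset.univ \ {a, c}, E2 a * E1 c * E1 d) + E3 a * E1 c + E2 a * E2 c) := by
    intro a c hac
    rw [split2 hac (fun d => J a a c d)]
    congr 2
    · refine Finset.sum_congr rfl fun d hd => ?_
      obtain ⟨hda, hdc⟩ : d ≠ a ∧ d ≠ c := by simpa using hd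
      exact h211 a c d hac hda.symm hdc.symm
    · exact v2 a c hac
    · exact h22 a c hac
  have hCaba : ∀ a b, a ≠ b → ∑ d, J a b a d
      = ((∑ d ∈ Finset.univ \ {a, b}, E2 a * E1 b * E1 d) + E3 a * E1 b + E2 a * E2 b) := by
    intro a b hab
    rw [split2 hab (fun d => J a b a d)]
    congr 2
    · refine Finset.sum_congr rfl fun d hd => ?_
      obtain ⟨hda, hdb⟩ : d ≠ a ∧ d ≠ b := by simpa using hd
      exact u2 a b d hab hda.symm hdb.symm
    · exact v3 a b hab
    · exact w2 a b hab
  have hCabb : ∀ a b, a ≠ b → ∑ d, J a b b d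
      = ((∑ d ∈ Finset.univ \ {a, b}, E2 b * E1 a * E1 d) + E2 a * E2 b + E3 b * E1 a) := by
    intro a b hab
    rw [split2 hab (fun d => J a b b d)]
    congr 2
    · refine Finset.sum_congr rfl fun d hd => ?_
      obtain ⟨hda, hdb⟩ : d ≠ a ∧ d ≠ b := by simpa using hd
      exact u4 b a d hab.symm hdb.symm hda.symm
    · exact w3 a b hab
    · exact v4 b a hab.symm
  have hC : ∀ a b c, a ≠ b → a ≠ c → b ≠ c → ∑ d, J a b c d
      = ((∑ d ∈ Finset.univ \ {a, b, c}, E1 a * E1 b * E1 c * E1 d)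
          + E2 a * E1 b * E1 c + E2 b * E1 a * E1 c + E2 c * E1 a * E1 b) := by
    intro a b c hab hac hbc
    rw [split3 hab hac hbc (fun d => J a b c d)]
    congr 3
    · refine Finset.sum_congr rfl fun d hd => ?_
      obtain ⟨hda, hdb, hdc⟩ : d ≠ a ∧ d ≠ b ∧ d ≠ c := by simpa using hd
      exact h1111 a b c d hab hac hda.symm hbc hdb.symm hdc.symm
    · exact u3 a b c hab hac hbc
    · exact u5 b a c hab.symm hbc hac
    · exact u6 c a b hac.symm hbc.symm hab
  have hB : ∀ a b, a ≠ b → ∑ c, ∑ d, J a b c d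
      = ((∑ c ∈ Finset.univ \ {a, b},
            ((∑ d ∈ Finset.univ \ {a, b, c}, E1 a * E1 b * E1 c * E1 d)
              + E2 a * E1 b * E1 c + E2 b * E1 a * E1 c + E2 c * E1 a * E1 b))
          + ((∑ d ∈ Finset.univ \ {a, b}, E2 a * E1 b * E1 d) + E3 a * E1 b + E2 a * E2 b)
          + ((∑ d ∈ Finset.univ \ {a, b}, E2 b * E1 a * E1 d) + E2 a * E2 b + E3 b * E1 a)) := by
    intro a b hab
    rw [split2 hab (fun c => ∑ d, J a b c d)]
    congr 2
    · refine Finset.sum_congr rfl fun c hc => ?_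
      obtain ⟨hca, hcb⟩ : c ≠ a ∧ c ≠ b := by simpa using hc
      exact hC a b c hab hca.symm hcb.symm
    · exact hCaba a b hab
    · exact hCabb a b hab
  have hBaa : ∀ a, ∑ c, ∑ d, J a a c d
      = ((∑ c ∈ Finset.univ \ {a},
            ((∑ d ∈ Finset.univ \ {a, c}, E2 a * E1 c * E1 d) + E3 a * E1 c + E2 a * E2 c))
          + ((∑ d ∈ Finset.univ \ {a}, E3 a * E1 d) + E4 a)) := by
    intro a
    rw [split1 a (fun c => ∑ d, J a a c d)]
    congr 1
    · refine Finset.sum_congr rfl fun c hc => ?_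
      have hca : c ≠ a := by simpa using hc
      exact hDaac a c hca.symm
    · exact hDaaa a
  calc ∑ a, ∑ b, ∑ c, ∑ d, J a b c d
      = ∑ a, ((∑ b ∈ Finset.univ \ {a},
            ((∑ c ∈ Finset.univ \ {a, b},
              ((∑ d ∈ Finset.univ \ {a, b, c}, E1 a * E1 b * E1 c * E1 d)
                + E2 a * E1 b * E1 c + E2 b * E1 a * E1 c + E2 c * E1 a * E1 b))
            + ((∑ d ∈ Finset.univ \ {a, b}, E2 a * E1 b * E1 d) + E3 a * E1 b + E2 a * E2 b)
            + ((∑ d ∈ Finset.univ \ {a, b}, E2 b * E1 a * E1 d) + E2 a * E2 b + E3 b * E1 a)))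
          + ((∑ c ∈ Finset.univ \ {a},
              ((∑ d ∈ Finset.univ \ {a, c}, E2 a * E1 c * E1 d) + E3 a * E1 c + E2 a * E2 c))
            + ((∑ d ∈ Finset.univ \ {a}, E3 a * E1 d) + E4 a))) := by
        refine Finset.sum_congr rfl fun a _ => ?_
        rw [split1 a (fun b => ∑ c, ∑ d, J a b c d)]
        congr 1
        · refine Finset.sum_congr rfl fun b hb => ?_
          have hba : b ≠ a := by simpa using hb
          exact hB a b hba.symm
        · exact hBaa a
    _ = _ := by
        simp only [Finset.sum_add_distrib]
        rw [sym3_12 (fun x y z => E2 y * E1 x * E1 z),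
            sym3_cycle (fun x y z => E2 z * E1 x * E1 y),
            sym2s Finset.univ (fun x y => E3 y * E1 x)]
        ring


end DSaux

open DSaux

set_option maxHeartbeats 1000000 in
/-- **Second moment of the desired signal (Lemma 1, (35) + (17)).** If
`ξ_1, …, ξ_M` are independent with `ξ_m ~ Gamma(N, θ_m)`, then `E[(∑ ξ_m)⁴]`
equals the multinomial expansion with the explicit Gamma moments inserted. -/
theorem ds_second_moment {Ω : Type*} [MeasurableSpace Ω] (P : Measure Ω)
    [IsProbabilityMeasure P] (N M : ℕ) (hN : 0 < N) (hM : 0 < M)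
    (θ : Fin M → ℝ) (hθ : ∀ m, 0 < θ m)
    (ξ : Fin M → Ω → ℝ) (hmeas : ∀ m, Measurable (ξ m))
    (hindep : iIndepFun ξ P)
    (hgamma : ∀ m, HasGammaLaw P (ξ m) (N : ℝ) (θ m)) :
    ∫ ω, (∑ m, ξ m ω) ^ 4 ∂P =
      (∑ m, (N : ℝ) * ((N : ℝ) + 1) * ((N : ℝ) + 2) * ((N : ℝ) + 3) * θ m ^ 4)
      + 4 * ∑ m, ∑ m₁ ∈ Finset.univ \ {m},
          ((N : ℝ) * ((N : ℝ) + 1) * ((N : ℝ) + 2) * θ m ^ 3) * ((N : ℝ) * θ m₁)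
      + 3 * ∑ m, ∑ m₁ ∈ Finset.univ \ {m},
          ((N : ℝ) * ((N : ℝ) + 1) * θ m ^ 2) * ((N : ℝ) * ((N : ℝ) + 1) * θ m₁ ^ 2)
      + 6 * ∑ m, ∑ m₁ ∈ Finset.univ \ {m}, ∑ m₂ ∈ Finset.univ \ {m, m₁},
          ((N : ℝ) * ((N : ℝ) + 1) * θ m ^ 2) * ((N : ℝ) * θ m₁) * ((N : ℝ) * θ m₂)
      + ∑ m, ∑ m₁ ∈ Finset.univ \ {m}, ∑ m₂ ∈ Finset.univ \ {m, m₁},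
          ∑ m₃ ∈ Finset.univ \ {m, m₁, m₂},
          (N : ℝ) ^ 4 * θ m * θ m₁ * θ m₂ * θ m₃ := by
  classical
  have haN : (0:ℝ) < (N:ℝ) := by exact_mod_cast hN
  have hmom : ∀ (m : Fin M) (k : ℕ), Integrable (fun ω => ξ m ω ^ k) P ∧
      ∫ ω, ξ m ω ^ k ∂P = Real.Gamma ((N:ℝ) + k) / Real.Gamma (N:ℝ) * θ m ^ k :=
    fun m k => hasGammaLaw_moment haN (hθ m) (hmeas m) (hgamma m) k
  have hmval : ∀ (m : Fin M) (k : ℕ),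
      ∫ ω, ξ m ω ^ k ∂P = (∏ i ∈ Finset.range k, ((N:ℝ) + i)) * θ m ^ k := by
    intro m k
    rw [(hmom m k).2, Gamma_nat_shift haN k,
      mul_div_cancel_left₀ _ (Real.Gamma_pos_of_pos haN).ne']
  have hnn : ∀ m, ∀ᵐ ω ∂P, 0 ≤ ξ m ω := fun m => hasGammaLaw_nonneg (hmeas m) (hgamma m)
  have int4 : ∀ a b c d : Fin M,
      Integrable (fun ω => ξ a ω * ξ b ω * ξ c ω * ξ d ω) P := by
    intro a b c d
    refine Integrable.mono'
      ((((hmom a 4).1.add (hmom b 4).1).add (hmom c 4).1).add (hmom d 4).1)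
      ((((hmeas a).mul (hmeas b)).mul (hmeas c)).mul (hmeas d)).aestronglyMeasurable ?_
    filter_upwards [hnn a, hnn b, hnn c, hnn d] with ω h1 h2 h3 h4
    simp only [Pi.add_apply]
    rw [Real.norm_eq_abs, abs_of_nonneg (by positivity)]
    nlinarith [sq_nonneg (ξ a ω * ξ b ω - ξ c ω * ξ d ω), sq_nonneg (ξ a ω ^ 2 - ξ b ω ^ 2),
      sq_nonneg (ξ c ω ^ 2 - ξ d ω ^ 2),
      mul_nonneg (mul_nonneg (mul_nonneg h1 h2) h3) h4,
      mul_nonneg h1 h2, mul_nonneg h3 h4]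
  have hindpow : ∀ e : Fin M → ℕ,
      iIndepFun (fun i ω => ξ i ω ^ e i) P :=
    fun e => hindep.comp (fun i x => x ^ e i) (fun i => measurable_id.pow_const (e i))
  have key : ∀ (e : Fin M → ℕ) (s : Finset (Fin M)),
      ∫ ω, ∏ i ∈ s, ξ i ω ^ e i ∂P = ∏ i ∈ s, ∫ ω, ξ i ω ^ e i ∂P :=
    fun e s => (indep_prod_integral (hindpow e) (fun i => (hmeas i).pow_const (e i))
      (fun i => (hmom i (e i)).1) s).2
  -- pattern values
  have p4 : ∀ a : Fin M, ∫ ω, ξ a ω * ξ a ω * ξ a ω * ξ a ω ∂P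
      = (N:ℝ) * ((N:ℝ)+1) * ((N:ℝ)+2) * ((N:ℝ)+3) * θ a ^ 4 := by
    intro a
    rw [show (fun ω => ξ a ω * ξ a ω * ξ a ω * ξ a ω) = fun ω => ξ a ω ^ 4 from
      funext fun ω => by ring]
    rw [hmval a 4]
    norm_num [Finset.prod_range_succ]
  have p31 : ∀ a b : Fin M, a ≠ b → ∫ ω, ξ a ω * ξ a ω * ξ a ω * ξ b ω ∂P
      = ((N:ℝ) * ((N:ℝ)+1) * ((N:ℝ)+2) * θ a ^ 3) * ((N:ℝ) * θ b) := by
    intro a b hab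
    have hba : b ≠ a := hab.symm
    have h := key (Function.update (fun _ => 1) a 3) {a, b}
    simp only [Finset.prod_insert (show a ∉ ({b} : Finset (Fin M)) by simpa using hab),
      Finset.prod_singleton, Function.update_self, Function.update_of_ne hba] at h
    rw [show (fun ω => ξ a ω * ξ a ω * ξ a ω * ξ b ω) = fun ω => ξ a ω ^ 3 * ξ b ω ^ 1 from
      funext fun ω => by ring]
    rw [h, hmval a 3, hmval b 1]
    norm_num [Finset.prod_range_succ]
  have p22 : ∀ a b : Fin M, a ≠ b → ∫ ω, ξ a ω * ξ a ω * ξ b ω * ξ b ω ∂P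
      = ((N:ℝ) * ((N:ℝ)+1) * θ a ^ 2) * ((N:ℝ) * ((N:ℝ)+1) * θ b ^ 2) := by
    intro a b hab
    have h := key (fun _ => 2) {a, b}
    simp only [Finset.prod_insert (show a ∉ ({b} : Finset (Fin M)) by simpa using hab),
      Finset.prod_singleton] at h
    rw [show (fun ω => ξ a ω * ξ a ω * ξ b ω * ξ b ω) = fun ω => ξ a ω ^ 2 * ξ b ω ^ 2 from
      funext fun ω => by ring]
    rw [h, hmval a 2, hmval b 2]
    norm_num [Finset.prod_range_succ]
  have p211 : ∀ a b c : Fin M, a ≠ b → a ≠ c → b ≠ c →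
      ∫ ω, ξ a ω * ξ a ω * ξ b ω * ξ c ω ∂P
      = ((N:ℝ) * ((N:ℝ)+1) * θ a ^ 2) * ((N:ℝ) * θ b) * ((N:ℝ) * θ c) := by
    intro a b c hab hac hbc
    have h := key (Function.update (fun _ => 1) a 2) {a, b, c}
    simp only [Finset.prod_insert (show a ∉ ({b, c} : Finset (Fin M)) by simp [hab, hac]),
      Finset.prod_insert (show b ∉ ({c} : Finset (Fin M)) by simpa using hbc),
      Finset.prod_singleton, Function.update_self,
      Function.update_of_ne hab.symm, Function.update_of_ne hac.symm] at h
    rw [show (fun ω => ξ a ω * ξ a ω * ξ b ω * ξ c ω)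
        = fun ω => ξ a ω ^ 2 * (ξ b ω ^ 1 * ξ c ω ^ 1) from funext fun ω => by ring]
    rw [h, hmval a 2, hmval b 1, hmval c 1]
    norm_num [Finset.prod_range_succ]
    ring
  have p1111 : ∀ a b c d : Fin M, a ≠ b → a ≠ c → a ≠ d → b ≠ c → b ≠ d → c ≠ d →
      ∫ ω, ξ a ω * ξ b ω * ξ c ω * ξ d ω ∂P
      = ((N:ℝ) * θ a) * ((N:ℝ) * θ b) * ((N:ℝ) * θ c) * ((N:ℝ) * θ d) := by
    intro a b c d hab hac had hbc hbd hcd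
    have h := key (fun _ => 1) {a, b, c, d}
    simp only [Finset.prod_insert (show a ∉ ({b, c, d} : Finset (Fin M)) by
        simp [hab, hac, had]),
      Finset.prod_insert (show b ∉ ({c, d} : Finset (Fin M)) by simp [hbc, hbd]),
      Finset.prod_insert (show c ∉ ({d} : Finset (Fin M)) by simpa using hcd),
      Finset.prod_singleton] at h
    rw [show (fun ω => ξ a ω * ξ b ω * ξ c ω * ξ d ω)
        = fun ω => ξ a ω ^ 1 * (ξ b ω ^ 1 * (ξ c ω ^ 1 * ξ d ω ^ 1)) from
      funext fun ω => by ring]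
    rw [h, hmval a 1, hmval b 1, hmval c 1, hmval d 1]
    norm_num [Finset.prod_range_succ]
    ring
  have hs12 : ∀ a b c d : Fin M, ∫ ω, ξ a ω * ξ b ω * ξ c ω * ξ d ω ∂P
      = ∫ ω, ξ b ω * ξ a ω * ξ c ω * ξ d ω ∂P :=
    fun a b c d => integral_congr_ae (Filter.Eventually.of_forall fun ω => by ring)
  have hs23 : ∀ a b c d : Fin M, ∫ ω, ξ a ω * ξ b ω * ξ c ω * ξ d ω ∂P
      = ∫ ω, ξ a ω * ξ c ω * ξ b ω * ξ d ω ∂P :=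
    fun a b c d => integral_congr_ae (Filter.Eventually.of_forall fun ω => by ring)
  have hs34 : ∀ a b c d : Fin M, ∫ ω, ξ a ω * ξ b ω * ξ c ω * ξ d ω ∂P
      = ∫ ω, ξ a ω * ξ b ω * ξ d ω * ξ c ω ∂P :=
    fun a b c d => integral_congr_ae (Filter.Eventually.of_forall fun ω => by ring)
  -- interchange
  have hpt : ∀ ω, (∑ m, ξ m ω) ^ 4
      = ∑ a, ∑ b, ∑ c, ∑ d, ξ a ω * ξ b ω * ξ c ω * ξ d ω := by
    intro ω
    rw [show (∑ m, ξ m ω) ^ 4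
        = (∑ m, ξ m ω) * ((∑ m, ξ m ω) * ((∑ m, ξ m ω) * ∑ m, ξ m ω)) from by ring]
    simp only [Finset.sum_mul, Finset.mul_sum]
    refine Finset.sum_congr rfl fun a _ => Finset.sum_congr rfl fun b _ =>
      Finset.sum_congr rfl fun c _ => Finset.sum_congr rfl fun d _ => by ring
  have hI3 : ∀ a b c : Fin M,
      Integrable (fun ω => ∑ d, ξ a ω * ξ b ω * ξ c ω * ξ d ω) P :=
    fun a b c => integrable_finset_sum _ (fun d _ => int4 a b c d)
  have hI2 : ∀ a b : Fin M,
      Integrable (fun ω => ∑ c, ∑ d, ξ a ω * ξ b ω * ξ c ω * ξ d ω) P :=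
    fun a b => integrable_finset_sum _ (fun c _ => hI3 a b c)
  have hI1 : ∀ a : Fin M,
      Integrable (fun ω => ∑ b, ∑ c, ∑ d, ξ a ω * ξ b ω * ξ c ω * ξ d ω) P :=
    fun a => integrable_finset_sum _ (fun b _ => hI2 a b)
  have hinter : ∫ ω, (∑ m, ξ m ω) ^ 4 ∂P
      = ∑ a, ∑ b, ∑ c, ∑ d, ∫ ω, ξ a ω * ξ b ω * ξ c ω * ξ d ω ∂P := by
    rw [show (fun ω => (∑ m, ξ m ω) ^ 4)
        = fun ω => ∑ a, ∑ b, ∑ c, ∑ d, ξ a ω * ξ b ω * ξ c ω * ξ d ω from funext hpt]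
    rw [integral_finset_sum _ (fun a _ => hI1 a)]
    refine Finset.sum_congr rfl fun a _ => ?_
    rw [integral_finset_sum _ (fun b _ => hI2 a b)]
    refine Finset.sum_congr rfl fun b _ => ?_
    rw [integral_finset_sum _ (fun c _ => hI3 a b c)]
    refine Finset.sum_congr rfl fun c _ => ?_
    rw [integral_finset_sum _ (fun d _ => int4 a b c d)]
  rw [hinter]
  rw [expand4 (fun a b c d => ∫ ω, ξ a ω * ξ b ω * ξ c ω * ξ d ω ∂P)
      (fun m => (N:ℝ) * θ m)
      (fun m => (N:ℝ) * ((N:ℝ)+1) * θ m ^ 2)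
      (fun m => (N:ℝ) * ((N:ℝ)+1) * ((N:ℝ)+2) * θ m ^ 3)
      (fun m => (N:ℝ) * ((N:ℝ)+1) * ((N:ℝ)+2) * ((N:ℝ)+3) * θ m ^ 4)
      hs12 hs23 hs34 p4 p31 p22 p211 p1111]
  congr 1
  refine Finset.sum_congr rfl fun a _ => Finset.sum_congr rfl fun b _ =>
    Finset.sum_congr rfl fun c _ => Finset.sum_congr rfl fun d _ => by ring
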